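/- Let C : I → ℝ² be a C² plane curve on an open interval I, let D ⊂ ℝ² be open, and let u, v : D → I be C¹ functions such that C(u(p)) + C(v(p)) = 2p for all p ∈ D and [C'(u(p)), C'(v(p))] ≠ 0 on D (no parallel tangents at the chord endpoints). Define f : D → ℝ by f(p) = (1/4)·∫_{u(p)}^{v(p)} [C(s) − p, C'(s)] ds. Then det(D²f(p)) = −1 for every p ∈ D, where D²f denotes the Hessian matrix of f. In particular the graph of the area distance f is an indefinite improper affine sphere. -/

import Mathlib

noncomputable section

/-- Determinant of the 2×2 matrix with columns `X`, `Y`. -/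
def det2 (X Y : ℝ × ℝ) : ℝ := X.1 * Y.2 - X.2 * Y.1

/-- Hessian of `f` at `p`, as a bilinear form: `hess f p a b = aᵀ · D²f(p) · b`. -/
def hess (f : ℝ × ℝ → ℝ) (p : ℝ × ℝ) (a b : ℝ × ℝ) : ℝ :=
  fderiv ℝ (fderiv ℝ f) p a b

/-- Determinant of the Hessian matrix of `f` at `p`. -/
def hessDet (f : ℝ × ℝ → ℝ) (p : ℝ × ℝ) : ℝ :=
  hess f p (1, 0) (1, 0) * hess f p (0, 1) (0, 1)
    - hess f p (1, 0) (0, 1) * hess f p (0, 1) (1, 0)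

/-- The area distance `f(p) = (1/4)·∫_{u(p)}^{v(p)} [C(s) − p, C'(s)] ds` satisfies
the Monge–Ampère equation `det(D²f) = −1` on `D`: its graph is an indefinite improper
affine sphere. -/
theorem statement4 (a b : ℝ) (C : ℝ → ℝ × ℝ) (hC : ContDiffOn ℝ 2 C (Set.Ioo a b))
    (D : Set (ℝ × ℝ)) (hD : IsOpen D)
    (u v : ℝ × ℝ → ℝ)
    (hu : ContDiffOn ℝ 1 u D) (hv : ContDiffOn ℝ 1 v D)
    (humem : ∀ p ∈ D, u p ∈ Set.Ioo a b) (hvmem : ∀ p ∈ D, v p ∈ Set.Ioo a b)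
    (hchord : ∀ p ∈ D, C (u p) + C (v p) = (2 : ℝ) • p)
    (hdet : ∀ p ∈ D, det2 (deriv C (u p)) (deriv C (v p)) ≠ 0)
    (f : ℝ × ℝ → ℝ)
    (hf : ∀ p ∈ D, f p = (4⁻¹ : ℝ) * ∫ s in (u p)..(v p), det2 (C s - p) (deriv C s)) :
    ∀ p ∈ D, hessDet f p = -1 := by
  intro p hp
  have hIopen : IsOpen (Set.Ioo a b) := isOpen_Ioo
  -- derivative facts for C
  have hCd : ∀ t ∈ Set.Ioo a b, HasDerivAt C (deriv C t) t := fun t ht =>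
    ((hC.contDiffAt (hIopen.mem_nhds ht)).differentiableAt (by norm_num)).hasDerivAt
  have hC' : ContinuousOn (deriv C) (Set.Ioo a b) :=
    hC.continuousOn_deriv_of_isOpen hIopen (by norm_num)
  have hCc : ContinuousOn C (Set.Ioo a b) := hC.continuousOn
  have hgc : ContinuousOn (fun s => det2 (C s) (deriv C s)) (Set.Ioo a b) := by
    simp only [det2]
    exact (hCc.fst.mul hC'.snd).sub (hCc.snd.mul hC'.fst)
  have hsub : ∀ x ∈ Set.Ioo a b, ∀ y ∈ Set.Ioo a b, Set.uIcc x y ⊆ Set.Ioo a b :=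
    fun x hx y hy => Set.ordConnected_Ioo.uIcc_subset hx hy
  have hgint : ∀ x ∈ Set.Ioo a b, ∀ y ∈ Set.Ioo a b,
      IntervalIntegrable (fun s => det2 (C s) (deriv C s)) MeasureTheory.volume x y :=
    fun x hx y hy => (hgc.mono (hsub x hx y hy)).intervalIntegrable
  set c : ℝ := u p with hcdef
  have hcI : c ∈ Set.Ioo a b := humem p hp
  have hH : ∀ t ∈ Set.Ioo a b,
      HasDerivAt (fun t => ∫ s in c..t, det2 (C s) (deriv C s)) (det2 (C t) (deriv C t)) t :=
    fun t ht =>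
      intervalIntegral.integral_hasDerivAt_right (hgint c hcI t ht)
        (hgc.stronglyMeasurableAtFilter hIopen t ht) (hgc.continuousAt (hIopen.mem_nhds ht))
  -- the alternative formula for f
  have hfF : ∀ q ∈ D, f q = (fun q : ℝ × ℝ => 4⁻¹ *
      ((∫ s in c..(v q), det2 (C s) (deriv C s)) - (∫ s in c..(u q), det2 (C s) (deriv C s))
        - (q.1 * ((C (v q)).2 - (C (u q)).2) - q.2 * ((C (v q)).1 - (C (u q)).1)))) q := by
    intro q hq
    have huI := humem q hq
    have hvI := hvmem q hq
    have hsubq : Set.uIcc (u q) (v q) ⊆ Set.Ioo a b := hsub _ huI _ hvI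
    have hint1 : IntervalIntegrable (fun s => (deriv C s).1) MeasureTheory.volume (u q) (v q) :=
      ((hC'.mono hsubq).fst).intervalIntegrable
    have hint2 : IntervalIntegrable (fun s => (deriv C s).2) MeasureTheory.volume (u q) (v q) :=
      ((hC'.mono hsubq).snd).intervalIntegrable
    have hFTC1 : (∫ s in (u q)..(v q), (deriv C s).1) = (C (v q)).1 - (C (u q)).1 :=
      intervalIntegral.integral_eq_sub_of_hasDerivAt
        (fun s hs => (ContinuousLinearMap.fst ℝ ℝ ℝ).hasFDerivAt.comp_hasDerivAt s
          (hCd s (hsubq hs))) hint1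
    have hFTC2 : (∫ s in (u q)..(v q), (deriv C s).2) = (C (v q)).2 - (C (u q)).2 :=
      intervalIntegral.integral_eq_sub_of_hasDerivAt
        (fun s hs => (ContinuousLinearMap.snd ℝ ℝ ℝ).hasFDerivAt.comp_hasDerivAt s
          (hCd s (hsubq hs))) hint2
    have hsplit : (∫ s in c..(v q), det2 (C s) (deriv C s))
        - (∫ s in c..(u q), det2 (C s) (deriv C s))
        = ∫ s in (u q)..(v q), det2 (C s) (deriv C s) :=
      intervalIntegral.integral_interval_sub_left (hgint c hcI _ hvI) (hgint c hcI _ huI)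
    have hintegrand : ∀ s, det2 (C s - q) (deriv C s)
        = det2 (C s) (deriv C s) - (q.1 * (deriv C s).2 - q.2 * (deriv C s).1) := by
      intro s
      simp only [det2, Prod.fst_sub, Prod.snd_sub]
      ring
    rw [hf q hq]
    simp only [hintegrand]
    rw [intervalIntegral.integral_sub (hgint _ huI _ hvI)
      ((hint2.const_mul q.1).sub (hint1.const_mul q.2)),
      intervalIntegral.integral_sub (hint2.const_mul q.1) (hint1.const_mul q.2),
      intervalIntegral.integral_const_mul, intervalIntegral.integral_const_mul,
      hFTC1, hFTC2, hsplit]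
  -- derivative facts for u, v
  have hud : ∀ q ∈ D, HasFDerivAt u (fderiv ℝ u q) q := fun q hq =>
    ((hu.contDiffAt (hD.mem_nhds hq)).differentiableAt one_ne_zero).hasFDerivAt
  have hvd : ∀ q ∈ D, HasFDerivAt v (fderiv ℝ v q) q := fun q hq =>
    ((hv.contDiffAt (hD.mem_nhds hq)).differentiableAt one_ne_zero).hasFDerivAt
  have hCu : ∀ q ∈ D, HasFDerivAt (fun x => C (u x))
      ((ContinuousLinearMap.smulRight (1 : ℝ →L[ℝ] ℝ) (deriv C (u q))).comp (fderiv ℝ u q)) q :=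
    fun q hq => (hasDerivAt_iff_hasFDerivAt.1 (hCd _ (humem q hq))).comp q (hud q hq)
  have hCv : ∀ q ∈ D, HasFDerivAt (fun x => C (v x))
      ((ContinuousLinearMap.smulRight (1 : ℝ →L[ℝ] ℝ) (deriv C (v q))).comp (fderiv ℝ v q)) q :=
    fun q hq => (hasDerivAt_iff_hasFDerivAt.1 (hCd _ (hvmem q hq))).comp q (hvd q hq)
  -- the differentiated chord condition
  have hcon : ∀ q ∈ D, ∀ w : ℝ × ℝ,
      (fderiv ℝ u q w) • deriv C (u q) + (fderiv ℝ v q w) • deriv C (v q) = (2 : ℝ) • w := by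
    intro q hq w
    have hsum := (hCu q hq).add (hCv q hq)
    have hid : HasFDerivAt (fun x : ℝ × ℝ => (2 : ℝ) • x)
        ((2 : ℝ) • ContinuousLinearMap.id ℝ (ℝ × ℝ)) q := (hasFDerivAt_id q).const_smul (2 : ℝ)
    have heq : (fun x => C (u x) + C (v x)) =ᶠ[nhds q] (fun x : ℝ × ℝ => (2 : ℝ) • x) :=
      Filter.eventually_of_mem (hD.mem_nhds hq) (fun x hx => hchord x hx)
    have huniq := (hsum.congr_of_eventuallyEq heq.symm).unique hid
    have happ := congrArg (fun (L : (ℝ × ℝ) →L[ℝ] (ℝ × ℝ)) => L w) huniq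
    simpa using happ
  -- derivative of f on D
  have hFd : ∀ q ∈ D, HasFDerivAt f
      ((2⁻¹ * ((C (v q)).1 - (C (u q)).1)) • ContinuousLinearMap.snd ℝ ℝ ℝ
        - (2⁻¹ * ((C (v q)).2 - (C (u q)).2)) • ContinuousLinearMap.fst ℝ ℝ ℝ) q := by
    intro q hq
    have huI := humem q hq
    have hvI := hvmem q hq
    have hHv : HasFDerivAt (fun x => ∫ s in c..(v x), det2 (C s) (deriv C s))
        ((det2 (C (v q)) (deriv C (v q))) • fderiv ℝ v q) q :=
      (hH _ hvI).comp_hasFDerivAt q (hvd q hq)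
    have hHu : HasFDerivAt (fun x => ∫ s in c..(u x), det2 (C s) (deriv C s))
        ((det2 (C (u q)) (deriv C (u q))) • fderiv ℝ u q) q :=
      (hH _ huI).comp_hasFDerivAt q (hud q hq)
    have hCv1 : HasFDerivAt (fun x => (C (v x)).1)
        ((ContinuousLinearMap.fst ℝ ℝ ℝ).comp
          ((ContinuousLinearMap.smulRight (1 : ℝ →L[ℝ] ℝ) (deriv C (v q))).comp (fderiv ℝ v q))) q :=
      (ContinuousLinearMap.fst ℝ ℝ ℝ).hasFDerivAt.comp q (hCv q hq)
    have hCv2 : HasFDerivAt (fun x => (C (v x)).2)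
        ((ContinuousLinearMap.snd ℝ ℝ ℝ).comp
          ((ContinuousLinearMap.smulRight (1 : ℝ →L[ℝ] ℝ) (deriv C (v q))).comp (fderiv ℝ v q))) q :=
      (ContinuousLinearMap.snd ℝ ℝ ℝ).hasFDerivAt.comp q (hCv q hq)
    have hCu1 : HasFDerivAt (fun x => (C (u x)).1)
        ((ContinuousLinearMap.fst ℝ ℝ ℝ).comp
          ((ContinuousLinearMap.smulRight (1 : ℝ →L[ℝ] ℝ) (deriv C (u q))).comp (fderiv ℝ u q))) q :=
      (ContinuousLinearMap.fst ℝ ℝ ℝ).hasFDerivAt.comp q (hCu q hq)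
    have hCu2 : HasFDerivAt (fun x => (C (u x)).2)
        ((ContinuousLinearMap.snd ℝ ℝ ℝ).comp
          ((ContinuousLinearMap.smulRight (1 : ℝ →L[ℝ] ℝ) (deriv C (u q))).comp (fderiv ℝ u q))) q :=
      (ContinuousLinearMap.snd ℝ ℝ ℝ).hasFDerivAt.comp q (hCu q hq)
    have hq1 : HasFDerivAt (fun x : ℝ × ℝ => x.1) (ContinuousLinearMap.fst ℝ ℝ ℝ) q :=
      (ContinuousLinearMap.fst ℝ ℝ ℝ).hasFDerivAt
    have hq2 : HasFDerivAt (fun x : ℝ × ℝ => x.2) (ContinuousLinearMap.snd ℝ ℝ ℝ) q :=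
      (ContinuousLinearMap.snd ℝ ℝ ℝ).hasFDerivAt
    have hbig := (((hHv.sub hHu).sub
      ((hq1.mul (hCv2.sub hCu2)).sub (hq2.mul (hCv1.sub hCu1))))).const_mul (4⁻¹ : ℝ)
    have hfeq : f =ᶠ[nhds q] (fun q : ℝ × ℝ => 4⁻¹ *
        ((∫ s in c..(v q), det2 (C s) (deriv C s)) - (∫ s in c..(u q), det2 (C s) (deriv C s))
          - (q.1 * ((C (v q)).2 - (C (u q)).2) - q.2 * ((C (v q)).1 - (C (u q)).1)))) :=
      Filter.eventually_of_mem (hD.mem_nhds hq) hfF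
    have hbig' := hbig.congr_of_eventuallyEq hfeq
    refine HasFDerivAt.congr_fderiv hbig' (Eq.symm ?_)
    refine ContinuousLinearMap.ext fun w => ?_
    have e := hcon q hq w
    have e1 : (fderiv ℝ u q w) * (deriv C (u q)).1 + (fderiv ℝ v q w) * (deriv C (v q)).1
        = 2 * w.1 := by
      have := congrArg Prod.fst e
      simpa [Prod.smul_fst, smul_eq_mul] using this
    have e2 : (fderiv ℝ u q w) * (deriv C (u q)).2 + (fderiv ℝ v q w) * (deriv C (v q)).2
        = 2 * w.2 := by
      have := congrArg Prod.snd e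
      simpa [Prod.smul_snd, smul_eq_mul] using this
    have hch := hchord q hq
    have e3 : (C (u q)).1 + (C (v q)).1 = 2 * q.1 := by
      have := congrArg Prod.fst hch
      simpa [Prod.smul_fst, smul_eq_mul] using this
    have e4 : (C (u q)).2 + (C (v q)).2 = 2 * q.2 := by
      have := congrArg Prod.snd hch
      simpa [Prod.smul_snd, smul_eq_mul] using this
    simp only [ContinuousLinearMap.sub_apply, ContinuousLinearMap.add_apply,
      ContinuousLinearMap.smul_apply, ContinuousLinearMap.comp_apply,
      ContinuousLinearMap.smulRight_apply, ContinuousLinearMap.one_apply,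
      ContinuousLinearMap.coe_fst', ContinuousLinearMap.coe_snd',
      Prod.smul_fst, Prod.smul_snd, smul_eq_mul, det2, Pi.sub_apply]
    linear_combination
      (((C (v q)).2 - (C (u q)).2) / 8) * e1 - (((C (v q)).1 - (C (u q)).1) / 8) * e2
      - ((fderiv ℝ v q w * (deriv C (v q)).2 - fderiv ℝ u q w * (deriv C (u q)).2) / 8) * e3
      + ((fderiv ℝ v q w * (deriv C (v q)).1 - fderiv ℝ u q w * (deriv C (u q)).1) / 8) * e4
  -- second derivative at p
  have hc1 : HasFDerivAt (fun q : ℝ × ℝ => 2⁻¹ * ((C (v q)).1 - (C (u q)).1))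
      ((2⁻¹ : ℝ) • ((ContinuousLinearMap.fst ℝ ℝ ℝ).comp
          ((ContinuousLinearMap.smulRight (1 : ℝ →L[ℝ] ℝ) (deriv C (v p))).comp (fderiv ℝ v p))
        - (ContinuousLinearMap.fst ℝ ℝ ℝ).comp
          ((ContinuousLinearMap.smulRight (1 : ℝ →L[ℝ] ℝ) (deriv C (u p))).comp (fderiv ℝ u p)))) p :=
    ((((ContinuousLinearMap.fst ℝ ℝ ℝ).hasFDerivAt.comp p (hCv p hp)).sub
      ((ContinuousLinearMap.fst ℝ ℝ ℝ).hasFDerivAt.comp p (hCu p hp))).const_mul (2⁻¹ : ℝ))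
  have hc2 : HasFDerivAt (fun q : ℝ × ℝ => 2⁻¹ * ((C (v q)).2 - (C (u q)).2))
      ((2⁻¹ : ℝ) • ((ContinuousLinearMap.snd ℝ ℝ ℝ).comp
          ((ContinuousLinearMap.smulRight (1 : ℝ →L[ℝ] ℝ) (deriv C (v p))).comp (fderiv ℝ v p))
        - (ContinuousLinearMap.snd ℝ ℝ ℝ).comp
          ((ContinuousLinearMap.smulRight (1 : ℝ →L[ℝ] ℝ) (deriv C (u p))).comp (fderiv ℝ u p)))) p :=
    ((((ContinuousLinearMap.snd ℝ ℝ ℝ).hasFDerivAt.comp p (hCv p hp)).sub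
      ((ContinuousLinearMap.snd ℝ ℝ ℝ).hasFDerivAt.comp p (hCu p hp))).const_mul (2⁻¹ : ℝ))
  have hPhi := (hc1.smul (hasFDerivAt_const (ContinuousLinearMap.snd ℝ ℝ ℝ) p)).sub
    (hc2.smul (hasFDerivAt_const (ContinuousLinearMap.fst ℝ ℝ ℝ) p))
  have hev : fderiv ℝ f =ᶠ[nhds p] (fun q : ℝ × ℝ =>
      (2⁻¹ * ((C (v q)).1 - (C (u q)).1)) • ContinuousLinearMap.snd ℝ ℝ ℝ
        - (2⁻¹ * ((C (v q)).2 - (C (u q)).2)) • ContinuousLinearMap.fst ℝ ℝ ℝ) :=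
    Filter.eventually_of_mem (hD.mem_nhds hp) (fun q hq => (hFd q hq).fderiv)
  have hsecond := hev.fderiv_eq.trans hPhi.fderiv
  -- final algebra
  have h1 : (fderiv ℝ u p (1, 0)) * (deriv C (u p)).1 + (fderiv ℝ v p (1, 0)) * (deriv C (v p)).1
      = 2 := by
    have := congrArg Prod.fst (hcon p hp (1, 0))
    simpa [Prod.smul_fst, smul_eq_mul] using this
  have h2 : (fderiv ℝ u p (1, 0)) * (deriv C (u p)).2 + (fderiv ℝ v p (1, 0)) * (deriv C (v p)).2
      = 0 := by
    have := congrArg Prod.snd (hcon p hp (1, 0))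
    simpa [Prod.smul_snd, smul_eq_mul] using this
  have h3 : (fderiv ℝ u p (0, 1)) * (deriv C (u p)).1 + (fderiv ℝ v p (0, 1)) * (deriv C (v p)).1
      = 0 := by
    have := congrArg Prod.fst (hcon p hp (0, 1))
    simpa [Prod.smul_fst, smul_eq_mul] using this
  have h4 : (fderiv ℝ u p (0, 1)) * (deriv C (u p)).2 + (fderiv ℝ v p (0, 1)) * (deriv C (v p)).2
      = 2 := by
    have := congrArg Prod.snd (hcon p hp (0, 1))
    simpa [Prod.smul_snd, smul_eq_mul] using this
  simp only [hessDet, hess, hsecond]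
  simp only [ContinuousLinearMap.sub_apply, ContinuousLinearMap.add_apply,
    ContinuousLinearMap.smul_apply, ContinuousLinearMap.comp_apply,
    ContinuousLinearMap.smulRight_apply, ContinuousLinearMap.one_apply,
    ContinuousLinearMap.coe_fst', ContinuousLinearMap.coe_snd',
    ContinuousLinearMap.zero_apply, Prod.smul_fst, Prod.smul_snd, smul_eq_mul]
  have h14 : ((fderiv ℝ u p (1, 0)) * (deriv C (u p)).1 + (fderiv ℝ v p (1, 0)) * (deriv C (v p)).1)
      * ((fderiv ℝ u p (0, 1)) * (deriv C (u p)).2 + (fderiv ℝ v p (0, 1)) * (deriv C (v p)).2)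
      = 2 * 2 := by rw [h1, h4]
  have h23 : ((fderiv ℝ u p (1, 0)) * (deriv C (u p)).2 + (fderiv ℝ v p (1, 0)) * (deriv C (v p)).2)
      * ((fderiv ℝ u p (0, 1)) * (deriv C (u p)).1 + (fderiv ℝ v p (0, 1)) * (deriv C (v p)).1)
      = 0 * 0 := by rw [h2, h3]
  linear_combination (-(4⁻¹ : ℝ)) * h14 + (4⁻¹ : ℝ) * h23
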